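/- Let n ≥ 1, let K be a symmetric n×n real matrix, let r ∈ {1,…,n}, and let K′ be the rerooted matrix associated to K and r. Then for every symmetric n×n real matrix S, with S′ the rerooted sample matrix associated to S and r, one has tr(S K) = tr(S′ K′). -/
import Mathlib


open Finset Matrix

/-- The Farris transform coordinates `p` of a symmetric `n × n` matrix
`K = (k_{ij})` (with rows/columns thought of as indexed by `1, …, n`,
realized as `Fin n` via `i ↦ i.succ`), extended by a root index `0`:
`p_{0i} = p_{i0} = ∑_{j=1}^n k_{ij}` and `p_{ij} = −k_{ij}` for `i, j ≥ 1`. -/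
noncomputable def farrisP {n : ℕ} (K : Matrix (Fin n) (Fin n) ℝ) :
    Fin (n + 1) → Fin (n + 1) → ℝ := fun i j =>
  Fin.cases (motive := fun _ => ℝ)
    (Fin.cases (motive := fun _ => ℝ) 0 (fun j' => ∑ t, K j' t) j)
    (fun i' => Fin.cases (motive := fun _ => ℝ) (∑ t, K i' t)
      (fun j' => -K i' j') j) i

/-- The rerooted matrix `K′` associated to a symmetric matrix `K` and a new
root `r ∈ {1, …, n}`:  `K′_{rr} = ∑_{t=1}^n p_{0t}`, `K′_{rj} = K′_{jr} = −p_{0j}`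
for `j ≠ r`, `K′_{ii} = ∑_{t=0, t≠i}^n p_{it}` for `i ≠ r`, and
`K′_{ij} = −p_{ij}` for distinct `i, j ≠ r`. -/
noncomputable def rerootK {n : ℕ} (K : Matrix (Fin n) (Fin n) ℝ) (r : Fin n) :
    Matrix (Fin n) (Fin n) ℝ :=
  Matrix.of fun i j =>
    if i = r then
      (if j = r then ∑ t : Fin n, farrisP K 0 t.succ else -farrisP K 0 j.succ)
    else if j = r then -farrisP K 0 i.succ
    else if i = j then ∑ t ∈ Finset.univ.erase (i.succ : Fin (n + 1)), farrisP K i.succ t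
    else -farrisP K i.succ j.succ

/-- The rerooted sample matrix `S′` associated to a symmetric matrix
`S = (s_{ij})` and `r`:  `s′_{rr} = s_{rr}`, `s′_{rj} = s′_{jr} = s_{rr} − s_{rj}`
for `j ≠ r`, `s′_{ii} = s_{rr} + s_{ii} − 2 s_{ri}` for `i ≠ r`, and
`s′_{ij} = s_{rr} − s_{ri} − s_{rj} + s_{ij}` for distinct `i, j ≠ r`. -/
noncomputable def rerootS {n : ℕ} (S : Matrix (Fin n) (Fin n) ℝ) (r : Fin n) :
    Matrix (Fin n) (Fin n) ℝ :=
  Matrix.of fun i j =>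
    if i = r then (if j = r then S r r else S r r - S r j)
    else if j = r then S r r - S r i
    else if i = j then S r r + S i i - 2 * S r i
    else S r r - S r i - S r j + S i j

section Aux
variable {n : ℕ}

@[simp] lemma farrisP_zero_zero (K : Matrix (Fin n) (Fin n) ℝ) : farrisP K 0 0 = 0 := rfl
@[simp] lemma farrisP_zero_succ (K : Matrix (Fin n) (Fin n) ℝ) (j : Fin n) :
    farrisP K 0 j.succ = ∑ t, K j t := by simp [farrisP]
@[simp] lemma farrisP_succ_zero (K : Matrix (Fin n) (Fin n) ℝ) (i : Fin n) :
    farrisP K i.succ 0 = ∑ t, K i t := by simp [farrisP]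
@[simp] lemma farrisP_succ_succ (K : Matrix (Fin n) (Fin n) ℝ) (i j : Fin n) :
    farrisP K i.succ j.succ = -K i j := by simp [farrisP]

noncomputable def Shat (S : Matrix (Fin n) (Fin n) ℝ) : Fin (n+1) → Fin (n+1) → ℝ :=
  fun i j => Fin.cases (motive := fun _ => ℝ) 0
    (fun i' => Fin.cases (motive := fun _ => ℝ) 0 (fun j' => S i' j') j) i

@[simp] lemma Shat_zero (S : Matrix (Fin n) (Fin n) ℝ) (j : Fin (n+1)) : Shat S 0 j = 0 := rfl
@[simp] lemma Shat_succ_zero (S : Matrix (Fin n) (Fin n) ℝ) (i : Fin n) : Shat S i.succ 0 = 0 := by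
  simp [Shat]
@[simp] lemma Shat_succ_succ (S : Matrix (Fin n) (Fin n) ℝ) (i j : Fin n) :
    Shat S i.succ j.succ = S i j := by simp [Shat]

noncomputable def dm (S : Matrix (Fin n) (Fin n) ℝ) (i j : Fin (n+1)) : ℝ :=
  Shat S i i + Shat S j j - 2 * Shat S i j

lemma dm_self (S : Matrix (Fin n) (Fin n) ℝ) (i : Fin (n+1)) : dm S i i = 0 := by
  simp [dm]; ring

lemma lemA (K : Matrix (Fin n) (Fin n) ℝ) (hK : K.IsSymm) (S : Matrix (Fin n) (Fin n) ℝ) :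
    (S * K).trace = 2⁻¹ * ∑ i, ∑ j, farrisP K i j * dm S i j := by
  rw [Matrix.trace]
  simp only [Matrix.diag, Matrix.mul_apply]
  rw [Fin.sum_univ_succ]
  simp only [Fin.sum_univ_succ, farrisP_zero_zero, farrisP_zero_succ, farrisP_succ_zero,
    farrisP_succ_succ, dm, Shat_zero, Shat_succ_zero, Shat_succ_succ]
  have hL : ∑ x : Fin n, ∑ j : Fin n, S x j * K j x = ∑ x : Fin n, ∑ j : Fin n, K x j * S x j := by
    refine Finset.sum_congr rfl fun x _ => Finset.sum_congr rfl fun j _ => ?_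
    rw [hK.apply, mul_comm]
  rw [hL]
  have h2 : ∀ x y : Fin n, K x y * (2 * S x y) = 2 * (K x y * S x y) := by intros; ring
  simp only [zero_mul, zero_add, mul_zero, sub_zero, add_zero, Finset.sum_mul, neg_mul,
    mul_sub, mul_add, neg_sub, neg_add_rev, h2, Finset.sum_add_distrib, Finset.sum_sub_distrib,
    Finset.sum_neg_distrib, ← Finset.mul_sum]
  have hBC : ∑ x : Fin n, ∑ y : Fin n, K x y * S y y = ∑ x : Fin n, ∑ y : Fin n, K x y * S x x := by
    rw [Finset.sum_comm]
    exact Finset.sum_congr rfl fun x _ => Finset.sum_congr rfl fun y _ => by rw [hK.apply]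
  rw [hBC]
  ring

end Aux

section Aux2
variable {n : ℕ}

lemma farrisP_symm {K : Matrix (Fin n) (Fin n) ℝ} (hK : K.IsSymm) (i j : Fin (n+1)) :
    farrisP K i j = farrisP K j i := by
  induction i using Fin.cases <;> induction j using Fin.cases <;>
    simp [hK.apply]

lemma rerootK_isSymm {K : Matrix (Fin n) (Fin n) ℝ} (hK : K.IsSymm) (r : Fin n) :
    (rerootK K r).IsSymm := by
  rw [Matrix.IsSymm]
  ext i j
  simp only [Matrix.transpose_apply, rerootK, Matrix.of_apply]
  by_cases hi : i = r <;> by_cases hj : j = r <;> by_cases hij : i = j <;>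
    simp_all [farrisP_symm hK]
  · exact fun h => absurd h.symm hij

lemma row_sum_rerootK {K : Matrix (Fin n) (Fin n) ℝ} (hK : K.IsSymm) (r : Fin n) (j : Fin n) :
    ∑ t, rerootK K r j t = if j = r then ∑ t, K r t else -K r j := by
  by_cases hj : j = r
  · subst hj
    rw [if_pos rfl, ← Finset.add_sum_erase _ (fun t => rerootK K j j t) (Finset.mem_univ j)]
    have h1 : rerootK K j j j = ∑ t : Fin n, farrisP K 0 t.succ := by
      simp only [rerootK, Matrix.of_apply, if_pos rfl, if_true]
    have h2 : ∑ t ∈ Finset.univ.erase j, rerootK K j j t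
        = ∑ t ∈ Finset.univ.erase j, -farrisP K 0 t.succ := by
      refine Finset.sum_congr rfl fun t ht => ?_
      have htj : t ≠ j := Finset.ne_of_mem_erase ht
      simp only [rerootK, Matrix.of_apply, if_pos rfl, if_true, if_neg htj]
    rw [h1, h2, Finset.sum_neg_distrib, Finset.sum_erase_eq_sub (Finset.mem_univ j)]
    simp only [farrisP_zero_succ]
    ring
  · rw [if_neg hj, ← Finset.add_sum_erase _ (fun t => rerootK K r j t) (Finset.mem_univ r)]
    have hjmem : j ∈ Finset.univ.erase r := Finset.mem_erase.mpr ⟨hj, Finset.mem_univ j⟩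
    rw [← Finset.add_sum_erase _ (fun t => rerootK K r j t) hjmem]
    have h1 : rerootK K r j r = -farrisP K 0 j.succ := by
      simp only [rerootK, Matrix.of_apply, if_neg hj, if_pos rfl, if_true]
    have h2 : rerootK K r j j = K j j := by
      simp only [rerootK, Matrix.of_apply, if_neg hj, if_pos rfl, if_true]
      rw [Finset.sum_erase_eq_sub (Finset.mem_univ (j.succ : Fin (n+1))), Fin.sum_univ_succ]
      simp only [farrisP_succ_zero, farrisP_succ_succ, Finset.sum_neg_distrib]
      ring
    have h3 : ∑ t ∈ (Finset.univ.erase r).erase j, rerootK K r j t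
        = ∑ t ∈ (Finset.univ.erase r).erase j, K j t := by
      refine Finset.sum_congr rfl fun t ht => ?_
      have htj : t ≠ j := Finset.ne_of_mem_erase ht
      have htr : t ≠ r := Finset.ne_of_mem_erase (Finset.mem_of_mem_erase ht)
      simp only [rerootK, Matrix.of_apply, if_neg hj, if_neg htr,
        if_neg (fun h => htj h.symm : ¬ j = t), farrisP_succ_succ, neg_neg]
    have h4 : ∑ t ∈ (Finset.univ.erase r).erase j, K j t
        = ((∑ t, K j t) - K j r) - K j j := by
      rw [Finset.sum_erase_eq_sub hjmem, Finset.sum_erase_eq_sub (Finset.mem_univ r)]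
    rw [h1, h2, h3, h4, farrisP_zero_succ, hK.apply j r]
    ring

end Aux2

section Aux3
variable {n : ℕ}

lemma farrisP_reroot {K : Matrix (Fin n) (Fin n) ℝ} (hK : K.IsSymm) (r : Fin n)
    {i j : Fin (n + 1)} (hij : i ≠ j) :
    farrisP (rerootK K r) i j
      = farrisP K (Equiv.swap 0 r.succ i) (Equiv.swap 0 r.succ j) := by
  induction i using Fin.cases with
  | zero =>
    rw [Equiv.swap_apply_left]
    induction j using Fin.cases with
    | zero => exact absurd rfl hij
    | succ j' =>
      rw [farrisP_zero_succ, row_sum_rerootK hK]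
      by_cases hjr : j' = r
      · subst hjr
        rw [if_pos rfl, Equiv.swap_apply_right, farrisP_succ_zero]
      · rw [if_neg hjr, Equiv.swap_apply_of_ne_of_ne (Fin.succ_ne_zero j')
          (by simpa [Fin.succ_inj] using hjr), farrisP_succ_succ]
  | succ i' =>
    induction j using Fin.cases with
    | zero =>
      rw [Equiv.swap_apply_left, farrisP_succ_zero, row_sum_rerootK hK]
      by_cases hir : i' = r
      · subst hir
        rw [if_pos rfl, Equiv.swap_apply_right, farrisP_zero_succ]
      · rw [if_neg hir, Equiv.swap_apply_of_ne_of_ne (Fin.succ_ne_zero i')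
          (by simpa [Fin.succ_inj] using hir), farrisP_succ_succ, hK.apply i' r]
    | succ j' =>
      have hij' : i' ≠ j' := by simpa [Fin.succ_inj] using hij
      rw [farrisP_succ_succ]
      by_cases hir : i' = r
      · subst hir
        have hjr : ¬ j' = i' := fun h => hij' h.symm
        rw [Equiv.swap_apply_right, Equiv.swap_apply_of_ne_of_ne (Fin.succ_ne_zero j')
          (by simpa [Fin.succ_inj] using hjr)]
        simp only [rerootK, Matrix.of_apply, if_pos rfl, if_true, if_neg hjr, neg_neg,
          farrisP_zero_succ]
      · rw [Equiv.swap_apply_of_ne_of_ne (Fin.succ_ne_zero i')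
          (by simpa [Fin.succ_inj] using hir)]
        by_cases hjr : j' = r
        · subst hjr
          rw [Equiv.swap_apply_right]
          simp only [rerootK, Matrix.of_apply, if_neg hir, if_pos rfl, if_true, neg_neg,
            farrisP_zero_succ, farrisP_succ_zero]
        · rw [Equiv.swap_apply_of_ne_of_ne (Fin.succ_ne_zero j')
            (by simpa [Fin.succ_inj] using hjr)]
          simp only [rerootK, Matrix.of_apply, if_neg hir, if_neg hjr, if_neg hij', neg_neg]

lemma dm_reroot {S : Matrix (Fin n) (Fin n) ℝ} (hS : S.IsSymm) (r : Fin n)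
    {i j : Fin (n + 1)} (hij : i ≠ j) :
    dm (rerootS S r) i j = dm S (Equiv.swap 0 r.succ i) (Equiv.swap 0 r.succ j) := by
  induction i using Fin.cases with
  | zero =>
    rw [Equiv.swap_apply_left]
    induction j using Fin.cases with
    | zero => exact absurd rfl hij
    | succ j' =>
      by_cases hjr : j' = r
      · subst hjr
        rw [Equiv.swap_apply_right]
        simp [dm, rerootS]
      · rw [Equiv.swap_apply_of_ne_of_ne (Fin.succ_ne_zero j')
          (by simpa [Fin.succ_inj] using hjr)]
        simp [dm, rerootS, hjr]
  | succ i' =>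
    induction j using Fin.cases with
    | zero =>
      rw [Equiv.swap_apply_left]
      by_cases hir : i' = r
      · subst hir
        rw [Equiv.swap_apply_right]
        simp [dm, rerootS]
      · rw [Equiv.swap_apply_of_ne_of_ne (Fin.succ_ne_zero i')
          (by simpa [Fin.succ_inj] using hir)]
        simp [dm, rerootS, hir, hS.apply i' r]
        ring
    | succ j' =>
      have hij' : i' ≠ j' := by simpa [Fin.succ_inj] using hij
      by_cases hir : i' = r
      · subst hir
        have hjr : ¬ j' = i' := fun h => hij' h.symm
        rw [Equiv.swap_apply_right, Equiv.swap_apply_of_ne_of_ne (Fin.succ_ne_zero j')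
          (by simpa [Fin.succ_inj] using hjr)]
        simp [dm, rerootS, hjr]
        ring
      · rw [Equiv.swap_apply_of_ne_of_ne (Fin.succ_ne_zero i')
          (by simpa [Fin.succ_inj] using hir)]
        by_cases hjr : j' = r
        · subst hjr
          rw [Equiv.swap_apply_right]
          simp [dm, rerootS, hir, hij']
          ring
        · rw [Equiv.swap_apply_of_ne_of_ne (Fin.succ_ne_zero j')
            (by simpa [Fin.succ_inj] using hjr)]
          simp [dm, rerootS, hir, hjr, hij']
          ring

end Aux3

theorem trace_reroot_eq {n : ℕ} (hn : 1 ≤ n)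
    (K : Matrix (Fin n) (Fin n) ℝ) (hK : K.IsSymm) (r : Fin n)
    (S : Matrix (Fin n) (Fin n) ℝ) (hS : S.IsSymm) :
    (S * K).trace = (rerootS S r * rerootK K r).trace := by
  rw [lemA K hK S, lemA (rerootK K r) (rerootK_isSymm hK r) (rerootS S r)]
  congr 1
  set σ := Equiv.swap (0 : Fin (n + 1)) r.succ with hσ
  have hterm : ∀ i j : Fin (n + 1),
      farrisP (rerootK K r) i j * dm (rerootS S r) i j
        = farrisP K (σ i) (σ j) * dm S (σ i) (σ j) := by
    intro i j
    by_cases hij : i = j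
    · subst hij
      rw [dm_self, dm_self, mul_zero, mul_zero]
    · rw [farrisP_reroot hK r hij, dm_reroot hS r hij]
  calc ∑ i, ∑ j, farrisP K i j * dm S i j
      = ∑ i, ∑ j, farrisP K (σ i) j * dm S (σ i) j :=
        (Equiv.sum_comp σ (fun i => ∑ j, farrisP K i j * dm S i j)).symm
    _ = ∑ i, ∑ j, farrisP K (σ i) (σ j) * dm S (σ i) (σ j) :=
        Finset.sum_congr rfl fun i _ =>
          (Equiv.sum_comp σ (fun j => farrisP K (σ i) j * dm S (σ i) j)).symm
    _ = ∑ i, ∑ j, farrisP (rerootK K r) i j * dm (rerootS S r) i j :=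
        Finset.sum_congr rfl fun i _ => Finset.sum_congr rfl fun j _ => (hterm i j).symm
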